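/- arXiv:2603.00978 — 4 statements merged into one kernel-verified Lean document; each statement's English description precedes it below -/
import Mathlib

section
/- Strong duality for the direction-finding problem: let E be a real inner product space, g_e, g_p ∈ E with g_p ≠ 0, and ε ≥ 0. Then the supremum of ⟨g_e, d⟩ − ½‖d‖² over all d ∈ E with ⟨g_p, d⟩ ≥ −ε equals the minimum over λ ≥ 0 of the dual function L(λ) = ½‖g_e + λ g_p‖² + λ ε, and both the supremum and the minimum are attained. -/
open RealInnerProductSpace

lemma expand_norm_add_smul {E : Type*} [NormedAddCommGroup E] [InnerProductSpace ℝ E]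
    (ge gp : E) (t : ℝ) :
    ‖ge + t • gp‖ ^ 2 = ‖ge‖ ^ 2 + 2 * (t * ⟪gp, ge⟫) + t ^ 2 * ‖gp‖ ^ 2 := by
  rw [norm_add_sq_real, real_inner_smul_right, norm_smul]
  rw [real_inner_comm]
  simp [mul_pow, sq_abs]

/-- Strong duality: there exist a feasible d* and a multiplier λ* ≥ 0
such that d* maximizes the primal objective over the feasible set, λ* minimizes the
dual function over the nonnegative reals, and the two optimal values coincide.
(Hence the supremum of the primal equals the minimum of the dual, both attained.) -/
theorem strong_duality
    {E : Type*} [NormedAddCommGroup E] [InnerProductSpace ℝ E]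
    (ge gp : E) (hgp : gp ≠ 0) (ε : ℝ) (hε : 0 ≤ ε) :
    ∃ (dstar : E) (lamstar : ℝ),
      ⟪gp, dstar⟫ ≥ -ε ∧ 0 ≤ lamstar ∧
      (∀ d : E, ⟪gp, d⟫ ≥ -ε →
          ⟪ge, d⟫ - (1 / 2) * ‖d‖ ^ 2 ≤ ⟪ge, dstar⟫ - (1 / 2) * ‖dstar‖ ^ 2) ∧
      (∀ lam : ℝ, 0 ≤ lam →
          (1 / 2) * ‖ge + lamstar • gp‖ ^ 2 + lamstar * ε ≤
            (1 / 2) * ‖ge + lam • gp‖ ^ 2 + lam * ε) ∧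
      ⟪ge, dstar⟫ - (1 / 2) * ‖dstar‖ ^ 2 =
        (1 / 2) * ‖ge + lamstar • gp‖ ^ 2 + lamstar * ε := by
  have hgp' : 0 < ‖gp‖ := norm_pos_iff.mpr hgp
  have hC : (0:ℝ) < ‖gp‖ ^ 2 := by positivity
  by_cases h : 0 ≤ ⟪gp, ge⟫ + ε
  · refine ⟨ge, 0, by linarith, le_refl 0, ?_, ?_, ?_⟩
    · intro d _
      have h1 : ‖ge - d‖ ^ 2 = ‖ge‖ ^ 2 - 2 * ⟪ge, d⟫ + ‖d‖ ^ 2 := norm_sub_sq_real ge d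
      have h2 : (0:ℝ) ≤ ‖ge - d‖ ^ 2 := by positivity
      have h3 : ⟪ge, ge⟫ = ‖ge‖ ^ 2 := real_inner_self_eq_norm_sq ge
      nlinarith
    · intro lam hlam
      have h1 := expand_norm_add_smul ge gp lam
      have h2 : (0:ℝ) ≤ lam ^ 2 * ‖gp‖ ^ 2 := by positivity
      have h3 : 0 ≤ lam * (⟪gp, ge⟫ + ε) := mul_nonneg hlam h
      simp only [zero_smul, add_zero, zero_mul]
      nlinarith
    · have h3 : ⟪ge, ge⟫ = ‖ge‖ ^ 2 := real_inner_self_eq_norm_sq ge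
      simp only [zero_smul, add_zero, zero_mul]
      linarith
  · push_neg at h
    set L : ℝ := -(⟪gp, ge⟫ + ε) / ‖gp‖ ^ 2 with hL
    have hLpos : 0 < L := div_pos (by linarith) hC
    have hLC : L * ‖gp‖ ^ 2 = -(⟪gp, ge⟫ + ε) := by
      rw [hL, div_mul_cancel₀ _ (ne_of_gt hC)]
    have hgpgp : ⟪gp, gp⟫ = ‖gp‖ ^ 2 := real_inner_self_eq_norm_sq gp
    have hfeas : ⟪gp, ge + L • gp⟫ = -ε := by
      rw [inner_add_right, real_inner_smul_right, hgpgp]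
      linarith
    refine ⟨ge + L • gp, L, by rw [hfeas], le_of_lt hLpos, ?_, ?_, ?_⟩
    · intro d hd
      -- f(d*) - f(d) = ½‖d*-d‖² + L(⟪gp,d⟫+ε) ≥ 0
      have h1 : ‖(ge + L • gp) - d‖ ^ 2
          = ‖ge + L • gp‖ ^ 2 - 2 * ⟪ge + L • gp, d⟫ + ‖d‖ ^ 2 :=
        norm_sub_sq_real _ _
      have h2 : ⟪ge + L • gp, d⟫ = ⟪ge, d⟫ + L * ⟪gp, d⟫ := by
        rw [inner_add_left, real_inner_smul_left]
      have h3 : ⟪ge, ge + L • gp⟫ = ‖ge‖ ^ 2 + L * ⟪ge, gp⟫ := by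
        rw [inner_add_right, real_inner_smul_right, real_inner_self_eq_norm_sq]
      have h4 := expand_norm_add_smul ge gp L
      have h5 : (0:ℝ) ≤ ‖(ge + L • gp) - d‖ ^ 2 := by positivity
      have h6 : 0 ≤ L * (⟪gp, d⟫ + ε) := mul_nonneg (le_of_lt hLpos) (by linarith)
      have h7 : ⟪ge, gp⟫ = ⟪gp, ge⟫ := real_inner_comm gp ge
      nlinarith
    · intro lam hlam
      have h1 := expand_norm_add_smul ge gp L
      have h2 := expand_norm_add_smul ge gp lam
      have h3 : (0:ℝ) ≤ (lam - L) ^ 2 * ‖gp‖ ^ 2 := by positivity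
      nlinarith
    · have h3 : ⟪ge, ge + L • gp⟫ = ‖ge‖ ^ 2 + L * ⟪ge, gp⟫ := by
        rw [inner_add_right, real_inner_smul_right, real_inner_self_eq_norm_sq]
      have h4 := expand_norm_add_smul ge gp L
      have h7 : ⟪ge, gp⟫ = ⟪gp, ge⟫ := real_inner_comm gp ge
      nlinarith
end

section
/- Per-step variation bound for the dual functions: let E be a complete real inner product space, and let L_e, L_p : E → ℝ be differentiable with G-Lipschitz gradients and with gradient norms bounded by L, i.e., ‖∇L_e(x)‖ ≤ L and ‖∇L_p(x)‖ ≤ L for all x ∈ E. For θ, θ' ∈ E and ε, ε' ∈ ℝ define L_θ(λ) = ½‖∇L_e(θ) + λ ∇L_p(θ)‖² + λ ε and L_{θ'}(λ) = ½‖∇L_e(θ') + λ ∇L_p(θ')‖² + λ ε'. Then for every D ≥ 0 and every λ ∈ [0, D]: |L_{θ'}(λ) − L_θ(λ)| ≤ (1 + D)² L G ‖θ' − θ‖ + D |ε' − ε|. -/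
open RealInnerProductSpace

/-- Per-step variation bound for the dual functions: if L_e and L_p have
G-Lipschitz gradients with norms bounded by L, then for λ ∈ [0, D],
|L_{θ'}(λ) − L_θ(λ)| ≤ (1 + D)² L G ‖θ' − θ‖ + D |ε' − ε|. -/
theorem dual_per_step_variation_bound
    {E : Type*} [NormedAddCommGroup E] [InnerProductSpace ℝ E] [CompleteSpace E]
    (Le Lp : E → ℝ) (gradLe gradLp : E → E) (G L : ℝ)
    (hgradLe : ∀ x : E, HasGradientAt Le (gradLe x) x)
    (hgradLp : ∀ x : E, HasGradientAt Lp (gradLp x) x)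
    (hLipLe : ∀ x y : E, ‖gradLe x - gradLe y‖ ≤ G * ‖x - y‖)
    (hLipLp : ∀ x y : E, ‖gradLp x - gradLp y‖ ≤ G * ‖x - y‖)
    (hBndLe : ∀ x : E, ‖gradLe x‖ ≤ L)
    (hBndLp : ∀ x : E, ‖gradLp x‖ ≤ L)
    (θ θ' : E) (ε ε' : ℝ) :
    ∀ D : ℝ, 0 ≤ D → ∀ lam : ℝ, lam ∈ Set.Icc (0 : ℝ) D →
      |((1 / 2) * ‖gradLe θ' + lam • gradLp θ'‖ ^ 2 + lam * ε') -
          ((1 / 2) * ‖gradLe θ + lam • gradLp θ‖ ^ 2 + lam * ε)| ≤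
        (1 + D) ^ 2 * L * G * ‖θ' - θ‖ + D * |ε' - ε| := by
  intro D hD lam hlam
  obtain ⟨hlam0, hlamD⟩ := hlam
  set a := gradLe θ + lam • gradLp θ with ha_def
  set a' := gradLe θ' + lam • gradLp θ' with ha'_def
  have hL : 0 ≤ L := le_trans (norm_nonneg _) (hBndLe θ)
  have hbnd : ∀ x : E, ‖gradLe x + lam • gradLp x‖ ≤ (1 + D) * L := by
    intro x
    calc ‖gradLe x + lam • gradLp x‖ ≤ ‖gradLe x‖ + ‖lam • gradLp x‖ := norm_add_le _ _
      _ ≤ L + D * L := by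
          rw [norm_smul, Real.norm_eq_abs, abs_of_nonneg hlam0]
          gcongr
          · exact hBndLe x
          · exact hBndLp x
      _ = (1 + D) * L := by ring
  have ha : ‖a‖ ≤ (1 + D) * L := hbnd θ
  have ha' : ‖a'‖ ≤ (1 + D) * L := hbnd θ'
  have hG0 : 0 ≤ G * ‖θ' - θ‖ := le_trans (norm_nonneg _) (hLipLe θ' θ)
  have hdiff : ‖a' - a‖ ≤ (1 + D) * (G * ‖θ' - θ‖) := by
    have heq : a' - a = (gradLe θ' - gradLe θ) + lam • (gradLp θ' - gradLp θ) := by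
      rw [ha_def, ha'_def, smul_sub]; abel
    rw [heq]
    calc ‖(gradLe θ' - gradLe θ) + lam • (gradLp θ' - gradLp θ)‖
        ≤ ‖gradLe θ' - gradLe θ‖ + ‖lam • (gradLp θ' - gradLp θ)‖ := norm_add_le _ _
      _ ≤ G * ‖θ' - θ‖ + D * (G * ‖θ' - θ‖) := by
          rw [norm_smul, Real.norm_eq_abs, abs_of_nonneg hlam0]
          gcongr
          · exact hLipLe θ' θ
          · exact hLipLp θ' θ
      _ = (1 + D) * (G * ‖θ' - θ‖) := by ring
  have key : |(1 / 2) * ‖a'‖ ^ 2 - (1 / 2) * ‖a‖ ^ 2| ≤ (1 + D) ^ 2 * L * G * ‖θ' - θ‖ := by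
    have h1 : |‖a'‖ ^ 2 - ‖a‖ ^ 2| ≤ (‖a'‖ + ‖a‖) * ‖a' - a‖ := by
      have heq : ‖a'‖ ^ 2 - ‖a‖ ^ 2 = (‖a'‖ + ‖a‖) * (‖a'‖ - ‖a‖) := by ring
      rw [heq, abs_mul, abs_of_nonneg (by positivity)]
      gcongr
      exact abs_norm_sub_norm_le a' a
    have h2 : (‖a'‖ + ‖a‖) * ‖a' - a‖ ≤ ((1 + D) * L + (1 + D) * L) * ((1 + D) * (G * ‖θ' - θ‖)) := by
      gcongr
    calc |(1 / 2) * ‖a'‖ ^ 2 - (1 / 2) * ‖a‖ ^ 2| = (1 / 2) * |‖a'‖ ^ 2 - ‖a‖ ^ 2| := by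
          rw [show (1 / 2) * ‖a'‖ ^ 2 - (1 / 2) * ‖a‖ ^ 2 = (1 / 2) * (‖a'‖ ^ 2 - ‖a‖ ^ 2) by ring,
            abs_mul, abs_of_nonneg (by norm_num : (0:ℝ) ≤ 1 / 2)]
      _ ≤ (1 / 2) * (((1 + D) * L + (1 + D) * L) * ((1 + D) * (G * ‖θ' - θ‖))) := by
          have := h1.trans h2; linarith
      _ ≤ (1 + D) ^ 2 * L * G * ‖θ' - θ‖ := by nlinarith [sq_nonneg (1 + D)]
  calc |((1 / 2) * ‖a'‖ ^ 2 + lam * ε') - ((1 / 2) * ‖a‖ ^ 2 + lam * ε)|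
      = |((1 / 2) * ‖a'‖ ^ 2 - (1 / 2) * ‖a‖ ^ 2) + lam * (ε' - ε)| := by ring_nf
    _ ≤ |(1 / 2) * ‖a'‖ ^ 2 - (1 / 2) * ‖a‖ ^ 2| + |lam * (ε' - ε)| := abs_add_le _ _
    _ ≤ (1 + D) ^ 2 * L * G * ‖θ' - θ‖ + D * |ε' - ε| := by
        rw [abs_mul, abs_of_nonneg hlam0]
        gcongr
end

section
/- Direction-norm bound (Lemma of Appendix A-G): let E be a complete real inner product space and let L_e : E → ℝ be G-smooth and L_p : E → ℝ differentiable. Fix θ ∈ E, λ ≥ 0, ε ∈ ℝ, α with 0 < α ≤ 1/G, set d = ∇L_e(θ) + λ ∇L_p(θ) and θ' = θ − α d, and assume ⟨∇L_p(θ), d⟩ ≤ ε. Then ‖d‖² ≤ (2/α)(L_e(θ) − L_e(θ')) + 2 λ ε. -/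
open RealInnerProductSpace

/-- Descent lemma for functions with Lipschitz gradient. -/
lemma descent_lemma
    {E : Type*} [NormedAddCommGroup E] [InnerProductSpace ℝ E] [CompleteSpace E]
    (f : E → ℝ) (g : E → E) (G : ℝ) (hG : 0 ≤ G)
    (hf : ∀ x : E, HasGradientAt f (g x) x)
    (hLip : ∀ x y : E, ‖g x - g y‖ ≤ G * ‖x - y‖)
    (x v : E) :
    f (x + v) ≤ f x + ⟪g x, v⟫ + G / 2 * ‖v‖ ^ 2 := by
  set φ : ℝ → ℝ := fun t => f (x + t • v) with hφ
  have hφd : ∀ t : ℝ, HasDerivAt φ ⟪g (x + t • v), v⟫ t := by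
    intro t
    have hline : HasDerivAt (fun t : ℝ => x + t • v) v t := by
      simpa using ((hasDerivAt_id t).smul_const v).const_add x
    have := ((hf (x + t • v)).hasFDerivAt.comp_hasDerivAt t hline)
    exact this
  set F : ℝ → ℝ := fun t => f x + t * ⟪g x, v⟫ + G / 2 * t ^ 2 * ‖v‖ ^ 2 - φ t with hF
  have hFd : ∀ t : ℝ, HasDerivAt F (⟪g x, v⟫ + G * t * ‖v‖ ^ 2 - ⟪g (x + t • v), v⟫) t := by
    intro t
    have h1 : HasDerivAt (fun t : ℝ => f x + t * ⟪g x, v⟫ + G / 2 * t ^ 2 * ‖v‖ ^ 2)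
        (⟪g x, v⟫ + G * t * ‖v‖ ^ 2) t := by
      have := (((hasDerivAt_id t).mul_const (⟪g x, v⟫ : ℝ)).const_add (f x)).add
        (((hasDerivAt_pow 2 t).const_mul (G / 2)).mul_const (‖v‖ ^ 2))
      refine this.congr_deriv ?_
      push_cast
      ring
    exact h1.sub (hφd t)
  have hmono : MonotoneOn F (Set.Icc (0:ℝ) 1) := by
    apply monotoneOn_of_deriv_nonneg (convex_Icc 0 1)
    · exact Continuous.continuousOn (by
        have : Differentiable ℝ F := fun t => (hFd t).differentiableAt
        exact this.continuous)
    · intro t _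
      exact (hFd t).differentiableAt.differentiableWithinAt
    · intro t ht
      rw [(hFd t).deriv]
      have ht' : t ∈ Set.Ioo (0:ℝ) 1 := by
        simpa [interior_Icc] using ht
      have hinner : ⟪g (x + t • v) - g x, v⟫ ≤ G * t * ‖v‖ ^ 2 := by
        calc ⟪g (x + t • v) - g x, v⟫ ≤ ‖g (x + t • v) - g x‖ * ‖v‖ :=
              real_inner_le_norm _ _
          _ ≤ (G * ‖(x + t • v) - x‖) * ‖v‖ := by
              gcongr; exact hLip _ _
          _ = G * t * ‖v‖ ^ 2 := by
              rw [add_sub_cancel_left, norm_smul, Real.norm_eq_abs,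
                abs_of_pos ht'.1]; ring
      have : ⟪g (x + t • v), v⟫ - ⟪g x, v⟫ ≤ G * t * ‖v‖ ^ 2 := by
        rw [← inner_sub_left]; exact hinner
      linarith
  have h01 := hmono (Set.mem_Icc.2 ⟨le_refl 0, zero_le_one⟩)
    (Set.mem_Icc.2 ⟨zero_le_one, le_refl 1⟩) zero_le_one
  have hF0 : F 0 = 0 := by simp [hF, hφ]
  have hF1 : F 1 = f x + ⟪g x, v⟫ + G / 2 * ‖v‖ ^ 2 - f (x + v) := by
    simp [hF, hφ]
  rw [hF0, hF1] at h01
  linarith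

/-- Direction-norm bound: with L_e G-smooth, d = ∇L_e(θ) + λ ∇L_p(θ),
θ' = θ − α d, 0 < α ≤ 1/G, λ ≥ 0 and ⟨∇L_p(θ), d⟩ ≤ ε, one has
‖d‖² ≤ (2/α)(L_e(θ) − L_e(θ')) + 2 λ ε. -/
theorem direction_norm_bound
    {E : Type*} [NormedAddCommGroup E] [InnerProductSpace ℝ E] [CompleteSpace E]
    (Le Lp : E → ℝ) (gradLe gradLp : E → E) (G : ℝ)
    (hgradLe : ∀ x : E, HasGradientAt Le (gradLe x) x)
    (hLipLe : ∀ x y : E, ‖gradLe x - gradLe y‖ ≤ G * ‖x - y‖)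
    (hgradLp : ∀ x : E, HasGradientAt Lp (gradLp x) x)
    (θ : E) (lam ε α : ℝ) (hlam : 0 ≤ lam)
    (hα0 : 0 < α) (hαG : α ≤ 1 / G)
    (hconstr : ⟪gradLp θ, gradLe θ + lam • gradLp θ⟫ ≤ ε) :
    ‖gradLe θ + lam • gradLp θ‖ ^ 2 ≤
      (2 / α) * (Le θ - Le (θ - α • (gradLe θ + lam • gradLp θ))) + 2 * lam * ε := by
  set d : E := gradLe θ + lam • gradLp θ with hd
  -- G must be positive
  have hG : 0 < G := by
    by_contra h
    push_neg at h
    rcases lt_or_eq_of_le h with h' | h'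
    · have : 1 / G < 0 := div_neg_of_pos_of_neg one_pos h'
      linarith
    · rw [h'] at hαG; simp at hαG; linarith
  have hGα : G * α ≤ 1 := by
    rw [le_div_iff₀ hG] at hαG; linarith [hαG]
  -- descent lemma with v = -α • d
  have hdesc := descent_lemma Le gradLe G hG.le hgradLe hLipLe θ ((-α) • d)
  have hv : θ + (-α) • d = θ - α • d := by
    rw [neg_smul]; abel
  rw [hv] at hdesc
  have hinner1 : ⟪gradLe θ, (-α) • d⟫ = -α * ⟪gradLe θ, d⟫ := real_inner_smul_right _ _ _
  have hnormv : ‖(-α) • d‖ ^ 2 = α ^ 2 * ‖d‖ ^ 2 := by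
    rw [norm_smul, Real.norm_eq_abs, abs_neg, abs_of_pos hα0, mul_pow]
  rw [hinner1, hnormv] at hdesc
  -- expand ⟪gradLe θ, d⟫
  have hexp : ⟪gradLe θ, d⟫ = ‖d‖ ^ 2 - lam * ⟪gradLp θ, d⟫ := by
    have : ⟪d, d⟫ = ⟪gradLe θ, d⟫ + lam * ⟪gradLp θ, d⟫ := by
      rw [hd, inner_add_left, real_inner_smul_left]
    rw [← real_inner_self_eq_norm_sq]
    linarith
  have hdn := sq_nonneg ‖d‖
  have key : α * ‖d‖ ^ 2 ≤ 2 * (Le θ - Le (θ - α • d)) + α * (2 * lam * ε) := by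
    have h1 : lam * ⟪gradLp θ, d⟫ ≤ lam * ε := mul_le_mul_of_nonneg_left hconstr hlam
    nlinarith [hdesc, hexp, mul_le_mul_of_nonneg_right hGα (mul_nonneg hα0.le hdn)]
  calc ‖d‖ ^ 2 = (α * ‖d‖ ^ 2) / α := by field_simp
    _ ≤ (2 * (Le θ - Le (θ - α • d)) + α * (2 * lam * ε)) / α :=
        by gcongr
    _ = (2 / α) * (Le θ - Le (θ - α • d)) + 2 * lam * ε := by
        field_simp
end

section
/- Value of the primal at the surgically corrected direction: let E be a real inner product space, g_e, g_p ∈ E with g_p ≠ 0, ε ∈ ℝ, suppose ⟨g_p, g_e⟩ < −ε, let λ* = (−⟨g_p, g_e⟩ − ε)/‖g_p‖² and d* = g_e + λ* g_p. Then the primal objective value at d* equals the dual value at λ*: ⟨g_e, d*⟩ − ½‖d*‖² = ½‖g_e + λ* g_p‖² + λ* ε. -/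
open RealInnerProductSpace

/-- Value of the primal at the surgically corrected direction: if
⟨g_p, g_e⟩ < −ε, λ* = (−⟨g_p, g_e⟩ − ε)/‖g_p‖² and d* = g_e + λ* g_p, then
⟨g_e, d*⟩ − ½‖d*‖² = ½‖g_e + λ* g_p‖² + λ* ε. -/
theorem primal_value_equals_dual_value
    {E : Type*} [NormedAddCommGroup E] [InnerProductSpace ℝ E]
    (ge gp : E) (hgp : gp ≠ 0) (ε : ℝ) (hconflict : ⟪gp, ge⟫ < -ε) :
    ⟪ge, ge + ((-⟪gp, ge⟫ - ε) / ‖gp‖ ^ 2) • gp⟫ -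
        (1 / 2) * ‖ge + ((-⟪gp, ge⟫ - ε) / ‖gp‖ ^ 2) • gp‖ ^ 2 =
      (1 / 2) * ‖ge + ((-⟪gp, ge⟫ - ε) / ‖gp‖ ^ 2) • gp‖ ^ 2 +
        ((-⟪gp, ge⟫ - ε) / ‖gp‖ ^ 2) * ε := by
  have hn : ‖gp‖ ^ 2 ≠ 0 := pow_ne_zero 2 (norm_ne_zero_iff.mpr hgp)
  set l : ℝ := (-⟪gp, ge⟫ - ε) / ‖gp‖ ^ 2 with hl
  have h1 : ‖ge + l • gp‖ ^ 2 = ‖ge‖ ^ 2 + 2 * (l * ⟪ge, gp⟫) + l ^ 2 * ‖gp‖ ^ 2 := by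
    rw [@norm_add_sq_real, inner_smul_right, norm_smul]
    rw [Real.norm_eq_abs, mul_pow, sq_abs]
  have h2 : ⟪ge, ge + l • gp⟫ = ‖ge‖ ^ 2 + l * ⟪ge, gp⟫ := by
    rw [inner_add_right, inner_smul_right, real_inner_self_eq_norm_sq]
  have hsym : ⟪ge, gp⟫ = ⟪gp, ge⟫ := real_inner_comm _ _
  rw [h1, h2, hsym, hl]
  field_simp
  ring
end
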